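/- Adding an edge of capacity n between v_3 and v_4 in the constrained 4-leaf star (each leaf edge capacity 1, center score fixed at 2) yields a network in which the liquidity between v_1 and v_2 equals (n+2)/(4n+6), which is strictly less than 1/3 for all n ≥ 1 and strictly decreasing in n. -/
import Mathlib

open Finset

private def emb (n : ℕ) : ℕ × ℕ × ℕ → (Fin 4 → ℕ) :=
  fun p => ![p.1, p.2.1, p.2.2, n + 2 - p.1 - p.2.1 - p.2.2]

private lemma emb_inj (n : ℕ) : Function.Injective (emb n) := by
  rintro ⟨a, b, c⟩ ⟨a', b', c'⟩ h
  have h0 := congrFun h 0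
  have h1 := congrFun h 1
  have h2 := congrFun h 2
  simp [emb] at h0 h1 h2
  simp [Prod.ext_iff, h0, h1, h2]

private lemma classes_eq (n : ℕ) :
    ((Fintype.piFinset fun i : Fin 4 =>
        Finset.range (if (i : ℕ) < 2 then 2 else n + 2)).filter
        (fun s => ∑ i, s i = n + 2))
    = ((range 2 ×ˢ range 2 ×ˢ range (n + 2)).filter
        (fun p => 1 ≤ p.1 + p.2.1 + p.2.2 ∧ p.1 + p.2.1 + p.2.2 ≤ n + 2)).image (emb n) := by
  ext s
  simp only [mem_filter, Fintype.mem_piFinset, mem_image, mem_product, mem_range,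
    Fin.sum_univ_four]
  constructor
  · rintro ⟨hmem, hsum⟩
    have h0 : s 0 < 2 := by simpa using hmem 0
    have h1 : s 1 < 2 := by simpa using hmem 1
    have h2 : s 2 < n + 2 := by have := hmem 2; rwa [if_neg (by decide)] at this
    have h3 : s 3 < n + 2 := by have := hmem 3; rwa [if_neg (by decide)] at this
    refine ⟨(s 0, s 1, s 2), ⟨⟨h0, by dsimp; omega, by dsimp; omega⟩,
      by dsimp; omega, by dsimp; omega⟩, ?_⟩
    funext i
    fin_cases i <;> simp [emb] <;> omega
  · rintro ⟨⟨a, b, c⟩, ⟨⟨ha, hb, hc⟩, hlo, hhi⟩, rfl⟩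
    dsimp at hb hc hlo hhi
    refine ⟨fun i => ?_, by simp [emb]; omega⟩
    fin_cases i <;> simp [emb] <;> omega

private lemma card_classes (n : ℕ) :
    ((Fintype.piFinset fun i : Fin 4 =>
        Finset.range (if (i : ℕ) < 2 then 2 else n + 2)).filter
        (fun s => ∑ i, s i = n + 2)).card = 4 * n + 6 := by
  rw [classes_eq, card_image_of_injective _ (emb_inj n)]
  have hneg : ((range 2 ×ˢ range 2 ×ˢ range (n + 2)).filter
      (fun p => ¬(1 ≤ p.1 + p.2.1 + p.2.2 ∧ p.1 + p.2.1 + p.2.2 ≤ n + 2)))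
      = {((0 : ℕ), (0 : ℕ), (0 : ℕ)), ((1 : ℕ), (1 : ℕ), n + 1)} := by
    ext ⟨a, b, c⟩
    simp [Prod.ext_iff]
    omega
  have hcard2 : ({((0 : ℕ), (0 : ℕ), (0 : ℕ)), ((1 : ℕ), (1 : ℕ), n + 1)} : Finset (ℕ × ℕ × ℕ)).card = 2 := by
    rw [card_insert_of_notMem (by simp [Prod.ext_iff])]
    simp
  have htot := card_filter_add_card_filter_not
    (s := range 2 ×ˢ range 2 ×ˢ range (n + 2))
    (p := fun p : ℕ × ℕ × ℕ => 1 ≤ p.1 + p.2.1 + p.2.2 ∧ p.1 + p.2.1 + p.2.2 ≤ n + 2)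
  rw [hneg, hcard2] at htot
  simp [card_product, card_range] at htot
  omega

private lemma card_filtered (n : ℕ) :
    (((Fintype.piFinset fun i : Fin 4 =>
        Finset.range (if (i : ℕ) < 2 then 2 else n + 2)).filter
        (fun s => ∑ i, s i = n + 2)).filter
        (fun s => s 0 = 1 ∧ s 1 = 0)).card = n + 2 := by
  have heq : ((Fintype.piFinset fun i : Fin 4 =>
        Finset.range (if (i : ℕ) < 2 then 2 else n + 2)).filter
        (fun s => ∑ i, s i = n + 2)).filter (fun s => s 0 = 1 ∧ s 1 = 0)
      = (range (n + 2)).image (fun c => ![1, 0, c, n + 1 - c]) := by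
    ext s
    simp only [mem_filter, Fintype.mem_piFinset, mem_image, mem_range, Fin.sum_univ_four]
    constructor
    · rintro ⟨⟨hmem, hsum⟩, h0, h1⟩
      have h2 : s 2 < n + 2 := by have := hmem 2; rwa [if_neg (by decide)] at this
      have h3 : s 3 < n + 2 := by have := hmem 3; rwa [if_neg (by decide)] at this
      refine ⟨s 2, by omega, ?_⟩
      funext i
      fin_cases i <;> simp <;> omega
    · rintro ⟨c, hc, rfl⟩
      refine ⟨⟨fun i => ?_, by simp; omega⟩, by simp, by simp⟩
      fin_cases i <;> simp <;> omega
  rw [heq, card_image_of_injective, card_range]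
  intro c c' h
  have := congrFun h 2
  simpa using this

theorem star_with_extra_edge_liquidity
    (classes : ℕ → Finset (Fin 4 → ℕ))
    (hclasses : ∀ n, classes n =
      (Fintype.piFinset fun i : Fin 4 =>
        Finset.range (if (i : ℕ) < 2 then 2 else n + 2)).filter
        (fun s => ∑ i, s i = n + 2))
    (liq : ℕ → ℚ)
    (hliq : ∀ n, liq n =
      ((((classes n).filter fun s => s 0 = 1 ∧ s 1 = 0).card : ℚ)) /
        (((classes n).card : ℚ))) :
    (∀ n, (classes n).card = 4 * n + 6) ∧
    (∀ n, ((classes n).filter fun s => s 0 = 1 ∧ s 1 = 0).card = n + 2) ∧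
    (∀ n, liq n = ((n : ℚ) + 2) / (4 * n + 6)) ∧
    (∀ n, 1 ≤ n → liq n < 1 / 3) ∧
    StrictAnti liq := by
  have hcard : ∀ n, (classes n).card = 4 * n + 6 := fun n => by
    rw [hclasses]; exact card_classes n
  have hfil : ∀ n, ((classes n).filter fun s => s 0 = 1 ∧ s 1 = 0).card = n + 2 := fun n => by
    rw [hclasses]; exact card_filtered n
  have hval : ∀ n, liq n = ((n : ℚ) + 2) / (4 * n + 6) := fun n => by
    rw [hliq, hcard, hfil]; push_cast; ring_nf
  refine ⟨hcard, hfil, hval, fun n hn => ?_, ?_⟩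
  · rw [hval]
    have h1 : (1 : ℚ) ≤ n := by exact_mod_cast hn
    rw [div_lt_div_iff₀ (by positivity) (by norm_num)]
    nlinarith
  · apply strictAnti_nat_of_succ_lt
    intro n
    rw [hval, hval]
    have h0 : (0 : ℚ) ≤ n := by positivity
    rw [div_lt_div_iff₀ (by positivity) (by positivity)]
    push_cast
    nlinarith
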